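/- For all natural numbers n ≥ 1 and all m with 1 ≤ m ≤ n, the rational number binom(n-1, m-1) · gcd(m,n) / m is a positive integer. -/

import Mathlib

theorem stmt_0 (n m : ℕ) (hn : 1 ≤ n) (hm : 1 ≤ m) (hmn : m ≤ n) :
    ∃ k : ℕ, 0 < k ∧
      ((Nat.choose (n - 1) (m - 1) * Nat.gcd m n : ℚ) / (m : ℚ)) = (k : ℚ) := by
  have h1 : n * Nat.choose (n-1) (m-1) = Nat.choose n m * m := by
    have := Nat.add_one_mul_choose_eq (n-1) (m-1)
    have e1 : n - 1 + 1 = n := by omega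
    have e2 : m - 1 + 1 = m := by omega
    rwa [e1, e2] at this
  have hbez := Nat.gcd_eq_gcd_ab m n
  have hdvd : (m:ℤ) ∣ ((Nat.choose (n-1) (m-1) : ℤ) * (Nat.gcd m n : ℤ)) := by
    refine ⟨(Nat.choose (n-1) (m-1) : ℤ) * Nat.gcdA m n + (Nat.choose n m : ℤ) * Nat.gcdB m n, ?_⟩
    have h1' : (n:ℤ) * (Nat.choose (n-1) (m-1) : ℤ) = (Nat.choose n m : ℤ) * m := by
      exact_mod_cast h1
    rw [hbez]
    linear_combination (Nat.gcdB m n) * h1'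
  have hdvdN : m ∣ Nat.choose (n-1) (m-1) * Nat.gcd m n := by
    exact_mod_cast hdvd
  have hpos : 0 < Nat.choose (n-1) (m-1) * Nat.gcd m n := by
    apply Nat.mul_pos
    · exact Nat.choose_pos (by omega)
    · exact Nat.gcd_pos_of_pos_left n hm
  refine ⟨Nat.choose (n-1) (m-1) * Nat.gcd m n / m, Nat.div_pos (Nat.le_of_dvd hpos hdvdN) hm, ?_⟩
  have hmQ : (m:ℚ) ≠ 0 := by positivity
  rw [div_eq_iff hmQ]
  rw [← Nat.cast_mul, ← Nat.cast_mul (_ / m) m, Nat.div_mul_cancel hdvdN]
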